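/- Let u be a nonzero Laurent polynomial over ℂ with u⋆ = u. Then the sum Σ mz(u, z₀), taken over all z₀ on the unit circle 𝕋 = {z ∈ ℂ : |z| = 1} with u(z₀) = 0, is an even integer. -/

import Mathlib

open LaurentPolynomial Matrix
open scoped Classical

noncomputable section

abbrev LP := LaurentPolynomial ℂ

namespace QT

/-- The coefficient of `z^k` in a Laurent polynomial. -/
def coeff (u : LP) (k : ℤ) : ℂ := (AddMonoidAlgebra.coeff u) k

/-- The Hermitian conjugate `u⋆(z) = Σ conj(u(k)) z^{-k}`. -/
def hstar (u : LP) : LP :=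
  AddMonoidAlgebra.ofCoeff <|
    Finsupp.mapDomain (fun k => -k)
      (Finsupp.mapRange (starRingEnd ℂ) (map_zero _) (AddMonoidAlgebra.coeff u))

/-- `u` has symmetry with type `ε z^c`, i.e. `u(k) = ε u(c-k)` for all `k`. -/
def SymT (u : LP) (ε : ℂ) (c : ℤ) : Prop := ∀ k : ℤ, coeff u k = ε * coeff u (c - k)

def Sgn (ε : ℂ) : Prop := ε = 1 ∨ ε = -1

/-- `u` has symmetry (with some type). -/
def HasSym (u : LP) : Prop := ∃ ε c, Sgn ε ∧ SymT u ε c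

/-- The Laurent polynomial `z - a`. -/
def zsub (a : ℂ) : LP := T 1 - LaurentPolynomial.C a

/-- `m` is the multiplicity of `z₀` as a zero of `u`. -/
def mzIs (u : LP) (z₀ : ℂ) (m : ℕ) : Prop := zsub z₀ ^ m ∣ u ∧ ¬ zsub z₀ ^ (m + 1) ∣ u

/-- The multiplicity of `z₀` as a zero of `u`, as a function. -/
def mzF (u : LP) (z₀ : ℂ) : ℕ := sSup {m : ℕ | zsub z₀ ^ m ∣ u}

/-- The difference-of-(Hermitian)-squares property with respect to symmetry type `ε z^c`. -/
def DOS (u : LP) (ε : ℂ) (c : ℤ) : Prop :=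
  ∃ (u₁ u₂ : LP) (ε₁ ε₂ : ℂ) (c₁ c₂ : ℤ),
    Sgn ε₁ ∧ Sgn ε₂ ∧ SymT u₁ ε₁ c₁ ∧ SymT u₂ ε₂ c₂ ∧
    u₁ * hstar u₁ - u₂ * hstar u₂ = u ∧ ε₁ * ε₂ = ε ∧ c₁ - c₂ = c

/-- Degree: the largest exponent with nonzero coefficient (0 for the zero polynomial). -/
def degL (u : LP) : ℤ :=
  if h : u = 0 then 0
  else (AddMonoidAlgebra.coeff u).support.max' (Finsupp.support_nonempty_iff.mpr (mt AddMonoidAlgebra.coeff_eq_zero.mp h))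

/-- Lower degree: the smallest exponent with nonzero coefficient (0 for zero). -/
def ldegL (u : LP) : ℤ :=
  if h : u = 0 then 0
  else (AddMonoidAlgebra.coeff u).support.min' (Finsupp.support_nonempty_iff.mpr (mt AddMonoidAlgebra.coeff_eq_zero.mp h))

/-- Length `deg - ldeg`, with `len 0 = ⊥`. -/
def lenL (u : LP) : WithBot ℤ := if u = 0 then ⊥ else ((degL u - ldegL u : ℤ) : WithBot ℤ)

/-- `g` is a greatest common divisor of `a` and `b`. -/
def IsGCD2 (g a b : LP) : Prop := g ∣ a ∧ g ∣ b ∧ ∀ e : LP, e ∣ a → e ∣ b → e ∣ g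

/-- `g` is a greatest common divisor of `a`, `b`, `c`, `d`. -/
def IsGCD4 (g a b c d : LP) : Prop :=
  g ∣ a ∧ g ∣ b ∧ g ∣ c ∧ g ∣ d ∧ ∀ e : LP, e ∣ a → e ∣ b → e ∣ c → e ∣ d → e ∣ g

/-- The Hermitian conjugate transpose of a matrix of Laurent polynomials. -/
def hstarM (A : Matrix (Fin 2) (Fin 2) LP) : Matrix (Fin 2) (Fin 2) LP :=
  fun i j => hstar (A j i)

def IsHerm (A : Matrix (Fin 2) (Fin 2) LP) : Prop := hstarM A = A

/-- `diag(1, -1)`. -/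
def Jmat : Matrix (Fin 2) (Fin 2) LP := Matrix.diagonal ![1, -1]

/-- A square matrix of Laurent polynomials is strongly invertible if its determinant is a
nonzero monomial. -/
def StrongInv (A : Matrix (Fin 2) (Fin 2) LP) : Prop :=
  ∃ (lam : ℂ) (k : ℤ), lam ≠ 0 ∧ A.det = LaurentPolynomial.C lam * T k

/-- Compatible symmetry for a `2×2` matrix of Laurent polynomials. -/
def CompatSym (A : Matrix (Fin 2) (Fin 2) LP) : Prop :=
  ∃ (ε ε' : Fin 2 → ℂ) (c c' : Fin 2 → ℤ),
    (∀ j, Sgn (ε j)) ∧ (∀ k, Sgn (ε' k)) ∧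
    ∀ j k, SymT (A j k) (ε j * ε' k) (c' k - c j)

/-- Substitution `z ↦ z²`. -/
def sqDom (u : LP) : LP :=
  AddMonoidAlgebra.ofCoeff <| Finsupp.mapDomain (fun k => 2 * k) (AddMonoidAlgebra.coeff u)

/-- Substitution `z ↦ -z`. -/
def negSub (u : LP) : LP :=
  (AddMonoidAlgebra.coeff u).sum fun k c => (AddMonoidAlgebra.ofCoeff (Finsupp.single k ((-1 : ℂ) ^ k * c)) : LP)

/-- The `γ`-coset `u^{[γ]}(z) = Σ_k u(γ + 2k) z^k`. -/
def cosetL (u : LP) (γ : ℤ) : LP :=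
  AddMonoidAlgebra.ofCoeff <|
    Finsupp.comapDomain (fun k : ℤ => γ + 2 * k) (AddMonoidAlgebra.coeff u)
      (by intro a _ b _ h; simp only at h; omega)

/-- Evaluation of a Laurent polynomial at a point. -/
def evalL (u : LP) (z : ℂ) : ℂ := (AddMonoidAlgebra.coeff u).sum fun k c => c * z ^ k

/-- `{a; b₁, b₂}_{Θ,(1,-1)}` is a quasi-tight framelet filter bank. -/
def QTFB (a Θ b₁ b₂ : LP) : Prop :=
  sqDom Θ * hstar a * a + hstar b₁ * b₁ - hstar b₂ * b₂ = Θ ∧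
  sqDom Θ * hstar a * negSub a + hstar b₁ * negSub b₁ - hstar b₂ * negSub b₂ = 0

/-- The matrix `N_{a,Θ|n_b}` built from the quotients `A`, `B`. -/
def Nmat (A B : LP) : Matrix (Fin 2) (Fin 2) LP :=
  LaurentPolynomial.C (2 : ℂ)⁻¹ •
    !![cosetL A 0 + cosetL B 0, cosetL A 1 - cosetL B 1;
       T 1 * (cosetL A 1 + cosetL B 1), cosetL A 0 - cosetL B 0]


section Aux
open Polynomial

lemma coeff_toLaurent' (q : ℂ[X]) (k : ℤ) :
    coeff (Polynomial.toLaurent q) k = if 0 ≤ k then q.coeff k.toNat else 0 := by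
  rw [Polynomial.toLaurent_apply]
  rcases le_or_gt 0 k with h | h
  · lift k to ℕ using h
    rw [if_pos (by positivity)]
    have : coeff ((AddMonoidAlgebra.ofCoeff (Finsupp.mapDomain (Nat.cast : ℕ → ℤ) q.toFinsupp.coeff) : LP))
        ((Nat.cast : ℕ → ℤ) k) = q.toFinsupp.coeff k :=
      Finsupp.mapDomain_apply Nat.cast_injective _ _
    rw [show AddMonoidAlgebra.mapDomain (Nat.cast : ℕ → ℤ) q.toFinsupp = AddMonoidAlgebra.ofCoeff (Finsupp.mapDomain Nat.cast q.toFinsupp.coeff) from rfl]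
    simpa [Polynomial.coeff] using this
  · rw [if_neg (by omega)]
    have : coeff ((AddMonoidAlgebra.ofCoeff (Finsupp.mapDomain (Nat.cast : ℕ → ℤ) q.toFinsupp.coeff) : LP)) k = 0 := by
      apply Finsupp.mapDomain_notin_range
      rintro ⟨a, ha⟩; omega
    rw [show AddMonoidAlgebra.mapDomain (Nat.cast : ℕ → ℤ) q.toFinsupp = AddMonoidAlgebra.ofCoeff (Finsupp.mapDomain Nat.cast q.toFinsupp.coeff) from rfl]
    simpa using this

lemma coeff_toLaurent_mul_T (q : ℂ[X]) (m k : ℤ) :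
    coeff (Polynomial.toLaurent q * T m) k = if 0 ≤ k - m then q.coeff (k - m).toNat else 0 := by
  have h2 : coeff (Polynomial.toLaurent q * T m) k = coeff (Polynomial.toLaurent q) (k - m) * 1 :=
    AddMonoidAlgebra.coeff_mul_single_apply _ _ _ _
  rw [h2, mul_one]
  exact coeff_toLaurent' q (k - m)

lemma coeff_hstar (u : LP) (k : ℤ) :
    coeff (hstar u) k = (starRingEnd ℂ) (coeff u (-k)) := by
  have h : coeff (hstar u) k
      = (Finsupp.mapDomain (fun k : ℤ => -k)
          (Finsupp.mapRange (starRingEnd ℂ) (_root_.map_zero _) (AddMonoidAlgebra.coeff u))) (-(-k)) := by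
    simp [coeff, hstar]
  rw [h, Finsupp.mapDomain_apply neg_injective, Finsupp.mapRange_apply]
  rfl

/-- The evaluation ring hom at a nonzero point. -/
def evalHom (z : ℂ) (hz : z ≠ 0) : LP →+* ℂ :=
  AddMonoidAlgebra.liftNCRingHom (RingHom.id ℂ)
    ((Units.coeHom ℂ).comp (zpowersHom ℂˣ (Units.mk0 z hz)))
    (fun _ _ => Commute.all _ _)

lemma evalHom_single (z : ℂ) (hz : z ≠ 0) (k : ℤ) (c : ℂ) :
    evalHom z hz (AddMonoidAlgebra.ofCoeff (Finsupp.single k c) : LP) = c * z ^ k := by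
  show AddMonoidAlgebra.liftNC _ _ (AddMonoidAlgebra.single k c) = c * z ^ k
  rw [AddMonoidAlgebra.liftNC_single]
  simp [zpowersHom_apply]

lemma evalHom_apply (z : ℂ) (hz : z ≠ 0) (u : LP) : evalHom z hz u = evalL u z := by
  have h : ∀ f : ℤ →₀ ℂ, evalHom z hz (AddMonoidAlgebra.ofCoeff f : LP) = evalL (AddMonoidAlgebra.ofCoeff f : LP) z := by
    intro f
    induction f using Finsupp.induction_linear with
    | zero => simp [evalL]
    | add f g hf hg =>
        have hadd' : (AddMonoidAlgebra.ofCoeff (f + g) : LP) = (AddMonoidAlgebra.ofCoeff f : LP) + (AddMonoidAlgebra.ofCoeff g : LP) := rfl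
        rw [hadd', _root_.map_add, hf, hg]
        show _ = Finsupp.sum (f + g) fun k c => c * z ^ k
        rw [Finsupp.sum_add_index' (by simp) (by intros; ring)]
        rfl
    | single k c =>
        rw [evalHom_single]
        show _ = Finsupp.sum (Finsupp.single k c) fun k c => c * z ^ k
        rw [Finsupp.sum_single_index (by simp)]
  exact h u.coeff

lemma evalHom_T (z : ℂ) (hz : z ≠ 0) (n : ℤ) : evalHom z hz (T n) = z ^ n := by
  have := evalHom_single z hz n 1
  simpa using this

lemma evalHom_toLaurent (z : ℂ) (hz : z ≠ 0) (q : ℂ[X]) :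
    evalHom z hz (Polynomial.toLaurent q) = q.eval z := by
  have key : (evalHom z hz).comp Polynomial.toLaurent = Polynomial.evalRingHom z := by
    apply Polynomial.ringHom_ext
    · intro a
      simp only [RingHom.comp_apply, Polynomial.toLaurent_C, coe_evalRingHom, eval_C]
      have h1 : (LaurentPolynomial.C a : LP) = (AddMonoidAlgebra.ofCoeff (Finsupp.single 0 a) : LP) := rfl
      rw [h1, evalHom_single]; simp
    · simp only [RingHom.comp_apply, Polynomial.toLaurent_X, coe_evalRingHom, eval_X]
      have := evalHom_T z hz 1
      simpa using this
  calc evalHom z hz (Polynomial.toLaurent q)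
      = ((evalHom z hz).comp Polynomial.toLaurent) q := rfl
    _ = q.eval z := by rw [key]; simp

lemma evalL_toLaurent_mul_T (q : ℂ[X]) (m : ℤ) (z : ℂ) (hz : z ≠ 0) :
    evalL (Polynomial.toLaurent q * T m) z = q.eval z * z ^ m := by
  rw [← evalHom_apply z hz, _root_.map_mul, evalHom_toLaurent, evalHom_T]

lemma zsub_eq (a : ℂ) : zsub a = Polynomial.toLaurent (Polynomial.X - Polynomial.C a) := by
  rw [zsub, _root_.map_sub, Polynomial.toLaurent_X, Polynomial.toLaurent_C]

lemma isCoprime_pow (z : ℂ) (hz : z ≠ 0) (k n : ℕ) :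
    IsCoprime ((Polynomial.X - Polynomial.C z) ^ k) ((Polynomial.X : ℂ[X]) ^ n) := by
  apply IsCoprime.pow
  refine ⟨Polynomial.C (-z⁻¹), Polynomial.C z⁻¹, ?_⟩
  have : (Polynomial.C (-z⁻¹)) * (Polynomial.X - Polynomial.C z)
        + Polynomial.C z⁻¹ * Polynomial.X
      = Polynomial.C (z⁻¹ * z) := by
    rw [Polynomial.C_mul, _root_.map_neg]; ring
  rw [this, inv_mul_cancel₀ hz, _root_.map_one]

lemma dvd_iff_dvd (q f : ℂ[X]) (m : ℤ) (z : ℂ) (hz : z ≠ 0) (k : ℕ)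
    (hq : q = (Polynomial.X - Polynomial.C z) ^ k) :
    Polynomial.toLaurent q ∣ Polynomial.toLaurent f * T m ↔ q ∣ f := by
  constructor
  · rintro ⟨r, hr⟩
    have hr' : Polynomial.toLaurent f = Polynomial.toLaurent q * (r * T (-m)) := by
      have : Polynomial.toLaurent f = Polynomial.toLaurent f * T m * T (-m) := by
        rw [mul_T_assoc, add_neg_cancel, T_zero, mul_one]
      rw [this, hr, mul_assoc]
    obtain ⟨n, s, hs⟩ := LaurentPolynomial.exists_T_pow (r * T (-m))
    have h1 : Polynomial.toLaurent (f * Polynomial.X ^ n) = Polynomial.toLaurent (q * s) := by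
      rw [_root_.map_mul, _root_.map_mul, Polynomial.toLaurent_X_pow, hs, hr', mul_assoc]
    have h2 : f * Polynomial.X ^ n = q * s := Polynomial.toLaurent_injective h1
    have h3 : q ∣ f * Polynomial.X ^ n := ⟨s, h2⟩
    subst hq
    exact (isCoprime_pow z hz k n).dvd_of_dvd_mul_right h3
  · rintro ⟨s, hs⟩
    exact ⟨Polynomial.toLaurent s * T m, by rw [hs, _root_.map_mul]; ring⟩

lemma mzF_eq (f : ℂ[X]) (hf : f ≠ 0) (m : ℤ) (z : ℂ) (hz : z ≠ 0) :
    mzF (Polynomial.toLaurent f * T m) z = f.rootMultiplicity z := by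
  have hset : {k : ℕ | zsub z ^ k ∣ Polynomial.toLaurent f * T m}
      = Set.Iic (f.rootMultiplicity z) := by
    ext k
    rw [Set.mem_setOf_eq, zsub_eq, ← _root_.map_pow,
      dvd_iff_dvd _ f m z hz k rfl, Set.mem_Iic,
      Polynomial.le_rootMultiplicity_iff hf]
  rw [mzF, hset, csSup_Iic]

lemma reflect_one_X_sub_C (a : ℂ) (ha : a ≠ 0) :
    reflect 1 (Polynomial.X - Polynomial.C a)
      = Polynomial.C (-a) * (Polynomial.X - Polynomial.C a⁻¹) := by
  have h1 : reflect 1 (Polynomial.X - Polynomial.C a : ℂ[X])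
      = reflect 1 (Polynomial.X : ℂ[X]) - reflect 1 (Polynomial.C a) := reflect_sub _ _ _
  have hX : reflect 1 (Polynomial.X : ℂ[X]) = 1 := by
    have := reflect_monomial 1 1 (R := ℂ)
    simpa using this
  have hC : reflect 1 (Polynomial.C a) = Polynomial.C a * Polynomial.X := by
    have := reflect_C_mul_X_pow 1 0 (c := a) (R := ℂ)
    simpa using this
  rw [h1, hX, hC, mul_sub, ← Polynomial.C_mul, neg_mul, mul_inv_cancel₀ ha]
  simp only [_root_.map_neg, _root_.map_one]
  ring

lemma reflect_pow_X_sub_C (a : ℂ) (k : ℕ) :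
    reflect k ((Polynomial.X - Polynomial.C a : ℂ[X]) ^ k)
      = (reflect 1 (Polynomial.X - Polynomial.C a)) ^ k := by
  induction k with
  | zero => simp
  | succ n ih =>
      have hd1 : (Polynomial.X - Polynomial.C a : ℂ[X]).natDegree ≤ 1 := by
        simp [natDegree_X_sub_C]
      have hdn : ((Polynomial.X - Polynomial.C a : ℂ[X]) ^ n).natDegree ≤ n := by
        simp [natDegree_pow, natDegree_X_sub_C]
      calc reflect (n + 1) ((Polynomial.X - Polynomial.C a : ℂ[X]) ^ (n + 1))
          = reflect (1 + n)
              ((Polynomial.X - Polynomial.C a) * (Polynomial.X - Polynomial.C a) ^ n) := by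
            rw [pow_succ, add_comm, mul_comm]
        _ = reflect 1 (Polynomial.X - Polynomial.C a)
              * reflect n ((Polynomial.X - Polynomial.C a) ^ n) :=
            reflect_mul _ _ hd1 hdn
        _ = (reflect 1 (Polynomial.X - Polynomial.C a)) ^ (n + 1) := by
            rw [ih, pow_succ, mul_comm]

lemma rm_le_reflect (f : ℂ[X]) (hf : f ≠ 0) (D : ℕ) (hD : f.natDegree ≤ D)
    (a : ℂ) (ha : a ≠ 0) :
    f.rootMultiplicity a ≤ (reflect D f).rootMultiplicity a⁻¹ := by
  set k := f.rootMultiplicity a with hk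
  obtain ⟨g, hg⟩ : (Polynomial.X - Polynomial.C a) ^ k ∣ f := pow_rootMultiplicity_dvd f a
  have hg0 : g ≠ 0 := by rintro rfl; simp at hg; exact hf hg
  have hdg : g.natDegree ≤ D - k := by
    rw [hg, natDegree_mul (pow_ne_zero _ (X_sub_C_ne_zero a)) hg0, natDegree_pow,
      natDegree_X_sub_C, mul_one] at hD
    omega
  have hkle : k ≤ D := by
    rw [hg, natDegree_mul (pow_ne_zero _ (X_sub_C_ne_zero a)) hg0, natDegree_pow,
      natDegree_X_sub_C, mul_one] at hD
    omega
  have hsplit : reflect D f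
      = reflect k ((Polynomial.X - Polynomial.C a) ^ k) * reflect (D - k) g := by
    rw [hg, ← reflect_mul _ _ (by simp [natDegree_pow, natDegree_X_sub_C]) hdg]
    congr 1
    omega
  have hdvd : (Polynomial.X - Polynomial.C a⁻¹) ^ k ∣ reflect D f := by
    rw [hsplit, reflect_pow_X_sub_C, reflect_one_X_sub_C a ha, mul_pow]
    exact Dvd.dvd.mul_right (Dvd.dvd.mul_left dvd_rfl _) _
  have hne : reflect D f ≠ 0 := fun h => hf (reflect_eq_zero_iff.mp h)
  exact (le_rootMultiplicity_iff hne).mpr hdvd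

lemma even_card_of_invol {σ : ℂ → ℂ} (hσ : Function.Involutive σ)
    (N : Multiset ℂ) (hmap : N.map σ = N) (hfix : ∀ x ∈ N, σ x ≠ x) :
    Even (Multiset.card N) := by
  induction N using Multiset.strongInductionOn with
  | ih N IH =>
    rcases Multiset.empty_or_exists_mem N with h | ⟨a, ha⟩
    · simp [h]
    · have hsa : σ a ∈ N := by
        rw [← hmap]; exact Multiset.mem_map_of_mem σ ha
      have hne : σ a ≠ a := hfix a ha
      set N' := (N.erase a).erase (σ a) with hN'
      have hsub : N' < N :=
        lt_of_le_of_lt (Multiset.erase_le _ _) (Multiset.erase_lt.mpr ha)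
      have hmem' : ∀ x ∈ N', x ∈ N := fun x hx =>
        Multiset.mem_of_mem_erase (Multiset.mem_of_mem_erase hx)
      have hmap' : N'.map σ = N' := by
        rw [hN', Multiset.map_erase σ hσ.injective, Multiset.map_erase σ hσ.injective,
          hmap, hσ a, Multiset.erase_comm]
      have hcard : Multiset.card N = Multiset.card N' + 2 := by
        have h1 : σ a ∈ N.erase a := (Multiset.mem_erase_of_ne hne).mpr hsa
        rw [hN', Multiset.card_erase_of_mem h1, Multiset.card_erase_of_mem ha]
        have h2 : 0 < Multiset.card (N.erase a) :=
          Multiset.card_pos_iff_exists_mem.mpr ⟨_, h1⟩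
        have h3 : 0 < Multiset.card N := Multiset.card_pos_iff_exists_mem.mpr ⟨_, ha⟩
        have h4 := Multiset.card_erase_of_mem ha
        simp only [Nat.pred_eq_sub_one] at *
        omega
      have := IH N' hsub hmap' (fun x hx => hfix x (hmem' x hx))
      rw [hcard]
      exact this.add even_two

end Aux

/-- for a Hermitian Laurent polynomial, the total multiplicity of the
zeros on the unit circle is even (Lemma 3.13 of the paper). -/
theorem total_multiplicity_on_unit_circle_even
    (u : LP) (hu : u ≠ 0) (hh : hstar u = u) :
    ∃ S : Finset ℂ,
      (∀ z : ℂ, z ∈ S ↔ ‖z‖ = 1 ∧ evalL u z = 0) ∧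
      Even (∑ z ∈ S, mzF u z) := by
  classical
  -- decompose u = toLaurent q * T m with q(0) ≠ 0
  obtain ⟨n, p₀, hp₀⟩ := LaurentPolynomial.exists_T_pow u
  have hp₀0 : p₀ ≠ 0 := by
    intro h
    rw [h, _root_.map_zero] at hp₀
    exact hu ((LaurentPolynomial.isUnit_T (n : ℤ)).mul_left_eq_zero.mp hp₀.symm)
  obtain ⟨q, hq, hndvd⟩ :=
    p₀.exists_eq_pow_rootMultiplicity_mul_and_not_dvd hp₀0 0
  set r := p₀.rootMultiplicity 0 with hr
  have hq0 : q ≠ 0 := by rintro rfl; simp at hq; exact hp₀0 hq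
  have hqc : q.coeff 0 ≠ 0 := by
    intro h
    exact hndvd (by simpa using (Polynomial.X_dvd_iff).mpr h)
  set m : ℤ := (r : ℤ) - n with hm
  have hu2 : u = Polynomial.toLaurent q * T m := by
    have h1 : Polynomial.toLaurent p₀ = T (r : ℤ) * Polynomial.toLaurent q := by
      rw [hq, _root_.map_mul]
      congr 1
      simpa using Polynomial.toLaurent_X_pow r
    have h2 : u = Polynomial.toLaurent p₀ * T (-(n : ℤ)) := by
      rw [hp₀, mul_T_assoc, add_neg_cancel, T_zero, mul_one]
    rw [h2, h1, T_mul, mul_T_assoc]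
    congr 1
  have hcoeff : ∀ k : ℤ, coeff u k = if 0 ≤ k - m then q.coeff (k - m).toNat else 0 := by
    intro k
    rw [hu2]
    exact coeff_toLaurent_mul_T q m k
  have hsymc : ∀ k : ℤ, coeff u k = (starRingEnd ℂ) (coeff u (-k)) := by
    intro k
    conv_lhs => rw [← hh]
    exact coeff_hstar u k
  set D := q.natDegree with hD
  -- D = -2m
  have hqD : q.coeff D ≠ 0 := by
    rw [hD]
    exact Polynomial.leadingCoeff_ne_zero.mpr hq0
  have key1 : 0 ≤ -2 * m ∧ (-2 * m : ℤ) ≤ D := by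
    have h0 : coeff u m = q.coeff 0 := by rw [hcoeff m]; simp
    have h1 : q.coeff 0 = (starRingEnd ℂ) (coeff u (-m)) := by rw [← h0, hsymc m]
    have h2 : coeff u (-m) ≠ 0 := by
      intro h
      rw [h, _root_.map_zero] at h1
      exact hqc h1
    rw [hcoeff (-m)] at h2
    by_cases hc : 0 ≤ -m - m
    · rw [if_pos hc] at h2
      have h3 := Polynomial.le_natDegree_of_ne_zero h2
      constructor
      · omega
      · omega
    · rw [if_neg hc] at h2
      exact absurd rfl h2
  have key2 : (D : ℤ) ≤ -2 * m := by
    have h0 : coeff u ((D : ℤ) + m) = q.coeff D := by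
      rw [hcoeff]
      rw [if_pos (by omega)]
      congr 1
      omega
    have h1 : coeff u (-((D : ℤ) + m)) ≠ 0 := by
      intro h
      have := hsymc ((D : ℤ) + m)
      rw [h, _root_.map_zero, h0] at this
      exact hqD this
    rw [hcoeff] at h1
    by_cases hc : 0 ≤ -((D : ℤ) + m) - m
    · omega
    · rw [if_neg hc] at h1
      exact absurd rfl h1
  have hDm : (D : ℤ) = -2 * m := le_antisymm key2 key1.2
  have hEvenD : Even D := by
    have : Even (D : ℤ) := ⟨-m, by omega⟩
    exact Int.even_coe_nat D |>.mp this
  -- coefficient symmetry of q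
  have hsymq : ∀ i : ℕ, i ≤ D → q.coeff i = (starRingEnd ℂ) (q.coeff (D - i)) := by
    intro i hi
    have h0 : coeff u ((i : ℤ) + m) = q.coeff i := by
      rw [hcoeff, if_pos (by omega)]
      congr 1
      omega
    have h1 : coeff u (-((i : ℤ) + m)) = q.coeff (D - i) := by
      rw [hcoeff, if_pos (by omega)]
      congr 1
      omega
    rw [← h0, hsymc ((i : ℤ) + m), h1]
  -- q equals the reflected conjugate
  have hrefl : Polynomial.reflect D (q.map (starRingEnd ℂ)) = q := by
    apply Polynomial.ext
    intro i
    rw [Polynomial.coeff_reflect, Polynomial.coeff_map]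
    rcases le_or_gt i D with hi | hi
    · rw [Polynomial.revAt_le hi]
      rw [hsymq i hi]
    · have hrev : Polynomial.revAt D i = i := Polynomial.revAt_eq_self_of_lt hi
      rw [hrev]
      have : q.coeff i = 0 := Polynomial.coeff_eq_zero_of_natDegree_lt hi
      rw [this]
      simp
  -- multiplicity inversion symmetry
  have key : ∀ a : ℂ, a ≠ 0 →
      q.rootMultiplicity ((starRingEnd ℂ) a) ≤ q.rootMultiplicity a⁻¹ := by
    intro a ha
    have hmq0 : q.map (starRingEnd ℂ) ≠ 0 := by
      simpa using hq0
    have h1 : q.rootMultiplicity ((starRingEnd ℂ) a)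
        = (q.map (starRingEnd ℂ)).rootMultiplicity a := by
      have := Polynomial.eq_rootMultiplicity_map
        (f := (starRingEnd ℂ)) (p := q) (RingHom.injective _) ((starRingEnd ℂ) a)
      rw [this]
      congr 1
      exact Complex.conj_conj a
    have h2 : (q.map (starRingEnd ℂ)).rootMultiplicity a
        ≤ (Polynomial.reflect D (q.map (starRingEnd ℂ))).rootMultiplicity a⁻¹ :=
      rm_le_reflect _ hmq0 D Polynomial.natDegree_map_le a ha
    rw [hrefl] at h2
    omega
  have hinv : ∀ b : ℂ, b ≠ 0 →
      q.rootMultiplicity b = q.rootMultiplicity (((starRingEnd ℂ) b)⁻¹) := by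
    intro b hb
    apply le_antisymm
    · have := key ((starRingEnd ℂ) b) (by simpa using hb)
      rwa [Complex.conj_conj] at this
    · have := key b⁻¹ (inv_ne_zero hb)
      rwa [_root_.map_inv₀, inv_inv] at this
  -- the roots multiset
  set M := q.roots with hM
  set σ : ℂ → ℂ := fun z => ((starRingEnd ℂ) z)⁻¹ with hσdef
  have hσ : Function.Involutive σ := by
    intro z
    simp [hσdef, _root_.map_inv₀]
  have hM0 : (0 : ℂ) ∉ M := by
    rw [hM, Polynomial.mem_roots']
    rintro ⟨-, h⟩
    have : q.eval 0 = q.coeff 0 := by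
      rw [Polynomial.coeff_zero_eq_eval_zero]
    exact hqc (by rw [← this]; exact h)
  have hcount : ∀ b : ℂ, M.count b = q.rootMultiplicity b := fun b =>
    q.count_roots
  have hcountσ : ∀ b : ℂ, M.count (σ b) = M.count b := by
    intro b
    rcases eq_or_ne b 0 with rfl | hb
    · have : σ 0 = 0 := by simp [hσdef]
      rw [this]
    · rw [hcount, hcount, ← hinv b hb]
  have hMmap : M.map σ = M := by
    ext b
    have h1 : (M.map σ).count (σ (σ b)) = M.count (σ b) :=
      Multiset.count_map_eq_count' σ M hσ.injective (σ b)
    rw [hσ b] at h1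
    rw [h1, hcountσ]
  have hcardM : Multiset.card M = D := by
    rw [hM, hD]
    exact (Polynomial.splits_iff_card_roots.mp (IsAlgClosed.splits q))
  -- split into circle and off-circle parts
  set P : ℂ → Prop := fun z => ‖z‖ = 1 with hP
  set Mc := M.filter P with hMc
  set Mo := M.filter (fun z => ¬ P z) with hMo
  have habsσ : ∀ b : ℂ, b ≠ 0 → (P (σ b) ↔ P b) := by
    intro b hb
    have : ‖σ b‖ = ‖b‖⁻¹ := by
      simp [hσdef, _root_.map_inv₀]
    rw [hP]
    simp only
    rw [this]
    constructor
    · intro h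
      have hb' : ‖b‖ ≠ 0 := by simpa using hb
      field_simp at h
      exact h.symm
    · intro h
      rw [h]
      norm_num
  have hMo_map : Mo.map σ = Mo := by
    ext b
    have h1 : (Mo.map σ).count (σ (σ b)) = Mo.count (σ b) :=
      Multiset.count_map_eq_count' σ Mo hσ.injective (σ b)
    rw [hσ b] at h1
    rw [h1]
    rcases eq_or_ne b 0 with rfl | hb
    · have h0 : σ 0 = 0 := by simp [hσdef]
      rw [h0]
    · rw [hMo, Multiset.count_filter, Multiset.count_filter]
      by_cases hpb : P b
      · rw [if_neg (by rw [habsσ b hb]; exact fun h => h hpb),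
          if_neg (fun h => h hpb)]
      · rw [if_pos (by rw [habsσ b hb]; exact hpb), if_pos hpb, hcountσ]
  have hMo_fix : ∀ x ∈ Mo, σ x ≠ x := by
    intro x hx hfx
    have hxM : x ∈ M := Multiset.mem_of_mem_filter hx
    have hxP : ¬ P x := (Multiset.mem_filter.mp hx).2
    have hx0 : x ≠ 0 := fun h => hM0 (h ▸ hxM)
    apply hxP
    have h1 : (starRingEnd ℂ) x * x = 1 := by
      have hinv' : ((starRingEnd ℂ) x)⁻¹ = x := hfx
      have hcx : (starRingEnd ℂ) x ≠ 0 := by simpa using hx0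
      calc (starRingEnd ℂ) x * x = (starRingEnd ℂ) x * ((starRingEnd ℂ) x)⁻¹ := by
            rw [hinv']
        _ = 1 := mul_inv_cancel₀ hcx
    have h2 : Complex.normSq x = 1 := by
      have := Complex.mul_conj x
      rw [mul_comm] at this
      rw [this] at h1
      exact_mod_cast h1
    rw [hP]
    simp only
    have := Complex.normSq_eq_norm_sq x
    rw [this] at h2
    nlinarith [norm_nonneg x]
  have hEvenMo : Even (Multiset.card Mo) := even_card_of_invol hσ Mo hMo_map hMo_fix
  have hcards : Multiset.card Mc + Multiset.card Mo = D := by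
    rw [← hcardM, hMc, hMo]
    rw [← Multiset.card_add, Multiset.filter_add_not]
  have hEvenMc : Even (Multiset.card Mc) := by
    rcases hEvenD with ⟨d, hd⟩
    rcases hEvenMo with ⟨e, he⟩
    exact ⟨d - e, by omega⟩
  -- the finset of circle roots
  refine ⟨Mc.toFinset, ?_, ?_⟩
  · intro z
    rw [Multiset.mem_toFinset, hMc, Multiset.mem_filter]
    constructor
    · rintro ⟨hzM, hzP⟩
      have hz0 : z ≠ 0 := fun h => hM0 (h ▸ hzM)
      refine ⟨hzP, ?_⟩
      rw [hu2, evalL_toLaurent_mul_T q m z hz0]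
      have hev : q.eval z = 0 := (Polynomial.mem_roots'.mp hzM).2
      rw [hev, zero_mul]
    · rintro ⟨hzP, hzev⟩
      have hz0 : z ≠ 0 := by
        intro h
        simp only [hP, h] at hzP
        simp at hzP
      rw [hu2, evalL_toLaurent_mul_T q m z hz0] at hzev
      have hzpow : z ^ m ≠ 0 := zpow_ne_zero m hz0
      have hev : q.eval z = 0 := by
        rcases mul_eq_zero.mp hzev with h | h
        · exact h
        · exact absurd h hzpow
      exact ⟨Polynomial.mem_roots'.mpr ⟨hq0, hev⟩, hzP⟩
  · have hsum : ∑ z ∈ Mc.toFinset, mzF u z = Multiset.card Mc := by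
      rw [← Multiset.toFinset_sum_count_eq Mc]
      apply Finset.sum_congr rfl
      intro z hz
      have hzmem : z ∈ Mc := Multiset.mem_toFinset.mp hz
      have hzP : P z := (Multiset.mem_filter.mp hzmem).2
      have hz0 : z ≠ 0 := by
        intro h
        simp only [hP, h] at hzP
        simp at hzP
      rw [hu2, mzF_eq q hq0 m z hz0, ← hcount z, hMc, Multiset.count_filter, if_pos hzP]
    rw [hsum]
    exact hEvenMc


end QT
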